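/- Let H be a finite-dimensional complex inner product space with a self-adjoint involution γ (γ* = γ, γ² = 1), and let D be a self-adjoint operator on H anticommuting with γ (Dγ + γD = 0). Then for every t > 0, Tr(γ · exp(−t D²)) = dim(ker D ∩ H⁺) − dim(ker D ∩ H⁻), where H^± are the ±1 eigenspaces of γ. In particular Tr(γ exp(−tD²)) is independent of t. -/

import Mathlib

open Matrix NormedSpace

namespace MckeanSingerAux

variable {n : ℕ}

/-- If `M` commutes with `D` and `γ` anticommutes with `D`, then `Tr(γ D² M) = 0`. -/
lemma trace_trick (γ D M : Matrix (Fin n) (Fin n) ℂ)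
    (hanti : D * γ + γ * D = 0) (hM : D * M = M * D) :
    (γ * (D * D * M)).trace = 0 := by
  have hDγ : D * γ = -(γ * D) := eq_neg_of_add_eq_zero_left hanti
  have e1 : γ * (D * D * M) = γ * D * M * D := by
    calc γ * (D * D * M) = γ * (D * (D * M)) := by rw [mul_assoc D D M]
      _ = γ * (D * (M * D)) := by rw [hM]
      _ = γ * D * M * D := by simp only [mul_assoc]
  have e2 : (γ * D * M * D).trace = (D * (γ * D * M)).trace :=
    Matrix.trace_mul_comm (γ * D * M) D
  have e3 : D * (γ * D * M) = -(γ * (D * D * M)) := by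
    calc D * (γ * D * M) = (D * γ) * (D * M) := by simp only [mul_assoc]
      _ = (-(γ * D)) * (D * M) := by rw [hDγ]
      _ = -(γ * (D * D * M)) := by simp only [neg_mul, mul_assoc]
  have key : (γ * (D * D * M)).trace = -(γ * (D * D * M)).trace := by
    conv_lhs => rw [e1, e2, e3]
    rw [Matrix.trace_neg]
  linear_combination key / 2

/-- Uniqueness of the Hermitian projection onto `ker D`. -/
lemma proj_unique (D P₁ P₂ M₁ M₂ : Matrix (Fin n) (Fin n) ℂ)
    (h1 : P₁ᴴ = P₁) (h2 : P₂ᴴ = P₂) (hD1 : D * P₁ = 0) (hD2 : D * P₂ = 0)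
    (hM1 : 1 - P₁ = M₁ * D) (hM2 : 1 - P₂ = M₂ * D) : P₁ = P₂ := by
  have a : P₂ = P₁ * P₂ := by
    have : (1 - P₁) * P₂ = M₁ * D * P₂ := by rw [hM1]
    rw [sub_mul, one_mul, mul_assoc, hD2, mul_zero, sub_eq_zero] at this
    exact this
  have b : P₁ = P₂ * P₁ := by
    have : (1 - P₂) * P₁ = M₂ * D * P₁ := by rw [hM2]
    rw [sub_mul, one_mul, mul_assoc, hD1, mul_zero, sub_eq_zero] at this
    exact this
  have c := congrArg Matrix.conjTranspose a
  rw [Matrix.conjTranspose_mul, h1, h2, ← b] at c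
  exact c.symm

/-- The matrix trace of a matrix whose `mulVecLin` is a projection onto `p`
equals the dimension of `p`. -/
lemma trace_eq_finrank_of_isProj (Q : Matrix (Fin n) (Fin n) ℂ)
    (p : Submodule ℂ (Fin n → ℂ)) (hproj : LinearMap.IsProj p Q.mulVecLin) :
    Q.trace = (Module.finrank ℂ p : ℂ) := by
  have h := hproj.trace
  rw [LinearMap.trace_eq_matrix_trace ℂ (Pi.basisFun ℂ (Fin n)),
    LinearMap.toMatrix_eq_toMatrix'] at h
  have h2 : LinearMap.toMatrix' Q.mulVecLin = Q := LinearMap.toMatrix'_toLin' Q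
  rw [h2] at h
  exact h

end MckeanSingerAux

open MckeanSingerAux

set_option maxHeartbeats 2000000 in
/-- **Finite-dimensional McKean–Singer formula.**
`H = ℂⁿ`, `γ` a self-adjoint involution (grading), `D` self-adjoint and odd with
respect to `γ`.  Then for every `t > 0`,
`Tr(γ · exp(−t D²)) = dim(ker D ∩ H⁺) − dim(ker D ∩ H⁻)`,
where `H^± = ker(γ ∓ 1)` are the `±1` eigenspaces of `γ`.  In particular the
left-hand side is independent of `t`. -/
theorem mckean_singer_finite_dim {n : ℕ} (γ D : Matrix (Fin n) (Fin n) ℂ)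
    (hγ : γ.IsHermitian) (hγ2 : γ * γ = 1)
    (hD : D.IsHermitian) (hanti : D * γ + γ * D = 0)
    (t : ℝ) (ht : 0 < t) :
    (γ * NormedSpace.exp ((-t : ℂ) • (D * D))).trace =
      (Module.finrank ℂ
        ↥(LinearMap.ker D.mulVecLin ⊓ LinearMap.ker (γ - 1).mulVecLin) : ℂ) -
      (Module.finrank ℂ
        ↥(LinearMap.ker D.mulVecLin ⊓ LinearMap.ker (γ + 1).mulVecLin) : ℂ) := by
  classical
  -- spectral data for D, made opaque
  obtain ⟨U, lam, hU1, hU2, hspec⟩ :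
      ∃ (U : Matrix (Fin n) (Fin n) ℂ) (lam : Fin n → ℝ),
        star U * U = 1 ∧ U * star U = 1 ∧
          D = U * Matrix.diagonal (fun i => (lam i : ℂ)) * star U := by
    refine ⟨(hD.eigenvectorUnitary : Matrix (Fin n) (Fin n) ℂ), hD.eigenvalues,
      Matrix.mem_unitaryGroup_iff'.mp hD.eigenvectorUnitary.2,
      Matrix.mem_unitaryGroup_iff.mp hD.eigenvectorUnitary.2,
      hD.spectral_theorem⟩
  have hUisUnit : IsUnit U := ⟨⟨U, star U, hU2, hU1⟩, rfl⟩
  have hUinv : U⁻¹ = star U := Matrix.inv_eq_left_inv hU1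
  -- an opaque functional calculus
  obtain ⟨Φ, hPhi⟩ :
      ∃ Φ : (ℝ → ℂ) → Matrix (Fin n) (Fin n) ℂ,
        ∀ f, Φ f = U * Matrix.diagonal (fun i => f (lam i)) * star U :=
    ⟨_, fun _ => rfl⟩
  have Phi_congr : ∀ f g : ℝ → ℂ, (∀ x, f x = g x) → Φ f = Φ g := by
    intro f g hfg
    have : f = g := funext hfg
    rw [this]
  have Phi_mul : ∀ f g : ℝ → ℂ, Φ f * Φ g = Φ (fun x => f x * g x) := by
    intro f g
    simp only [hPhi, mul_assoc]
    rw [← mul_assoc (star U) U, hU1, one_mul, ← mul_assoc (Matrix.diagonal _),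
      Matrix.diagonal_mul_diagonal]
  have Phi_comm : ∀ f g : ℝ → ℂ, Φ f * Φ g = Φ g * Φ f := by
    intro f g
    have h' : (fun x => f x * g x) = (fun x => g x * f x) := funext fun x => mul_comm _ _
    rw [Phi_mul, Phi_mul, h']
  have Phi_add : ∀ f g : ℝ → ℂ, Φ (fun x => f x + g x) = Φ f + Φ g := by
    intro f g
    simp only [hPhi, ← Matrix.diagonal_add, mul_add, add_mul]
  have Phi_sub : ∀ f g : ℝ → ℂ, Φ (fun x => f x - g x) = Φ f - Φ g := by
    intro f g
    simp only [hPhi, ← Matrix.diagonal_sub, mul_sub, sub_mul]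
  have Phi_one : Φ (fun _ => 1) = 1 := by
    simp only [hPhi, Matrix.diagonal_one, mul_one, hU2]
  have Phi_zero : Φ (fun _ => 0) = 0 := by
    simp only [hPhi, Matrix.diagonal_zero, mul_zero, zero_mul]
  have Phi_star : ∀ f : ℝ → ℂ, (Φ f)ᴴ = Φ (fun x => starRingEnd ℂ (f x)) := by
    intro f
    simp only [hPhi, Matrix.star_eq_conjTranspose, Matrix.conjTranspose_mul,
      Matrix.conjTranspose_conjTranspose, Matrix.diagonal_conjTranspose, mul_assoc]
    rfl
  have Phi_D : Φ (fun x => (x : ℂ)) = D := by rw [hPhi]; exact hspec.symm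
  have hDD : D * D = Φ (fun x => (x : ℂ) * (x : ℂ)) := by
    rw [← Phi_D, Phi_mul]
  -- the relevant scalar functions
  obtain ⟨e, he⟩ : ∃ e : ℝ → ℂ,
      ∀ x, e x = Complex.exp ((-t : ℂ) * ((x : ℂ) * (x : ℂ))) := ⟨_, fun _ => rfl⟩
  obtain ⟨k, hk⟩ : ∃ k : ℝ → ℂ,
      ∀ x, k x = if x = 0 then 1 else 0 := ⟨_, fun _ => rfl⟩
  obtain ⟨h, hh⟩ : ∃ h : ℝ → ℂ,
      ∀ x, h x = if x = 0 then 0 else e x / ((x : ℂ) * (x : ℂ)) := ⟨_, fun _ => rfl⟩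
  obtain ⟨m2, hm2⟩ : ∃ m2 : ℝ → ℂ,
      ∀ x, m2 x = if x = 0 then 0 else 1 / (x : ℂ) := ⟨_, fun _ => rfl⟩
  obtain ⟨P, hPdef⟩ : ∃ P : Matrix (Fin n) (Fin n) ℂ, P = Φ k := ⟨_, rfl⟩
  -- exp(-t D²) = Φ e
  have hexp : NormedSpace.exp ((-t : ℂ) • (D * D)) = Φ e := by
    have hsmul : U * Matrix.diagonal (fun i => (-t : ℂ) * ((lam i : ℂ) * (lam i : ℂ))) * star U
        = (-t : ℂ) • (U * Matrix.diagonal (fun i => (lam i : ℂ) * (lam i : ℂ)) * star U) := by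
      rw [show (fun i => (-t : ℂ) * ((lam i : ℂ) * (lam i : ℂ)))
            = (-t : ℂ) • (fun i => (lam i : ℂ) * (lam i : ℂ)) from rfl,
        Matrix.diagonal_smul, mul_smul_comm, smul_mul_assoc]
    rw [hDD, hPhi]
    rw [← hsmul, ← hUinv, Matrix.exp_conj U _ hUisUnit, hUinv]
    rw [Matrix.exp_diagonal, Pi.exp_def, hPhi]
    have hfun : (fun i => NormedSpace.exp ((-t : ℂ) * ((lam i : ℂ) * (lam i : ℂ))))
        = fun i => e (lam i) := by
      funext i
      rw [he, Complex.exp_eq_exp_ℂ]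
    rw [hfun]
  -- decomposition Φ e = P + D² Φ h
  have hdecomp : Φ e = P + D * D * Φ h := by
    have hfun : ∀ x : ℝ, e x = k x + ((x : ℂ) * (x : ℂ)) * h x := by
      intro x
      by_cases hx : x = 0
      · simp [hk, hh, he, hx]
      · have hx' : (x : ℂ) ≠ 0 := Complex.ofReal_ne_zero.mpr hx
        simp only [hk, hh, he, if_neg hx]
        field_simp
        ring
    calc Φ e = Φ (fun x => k x + ((x : ℂ) * (x : ℂ)) * h x) := Phi_congr _ _ hfun
      _ = Φ k + Φ (fun x => ((x : ℂ) * (x : ℂ)) * h x) := Phi_add _ _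
      _ = P + D * D * Φ h := by
          rw [hDD, Phi_mul (fun x => (x : ℂ) * (x : ℂ)) h, hPdef]
  -- step 1: trace reduces to Tr(γ P)
  have hcommDh : D * Φ h = Φ h * D := by
    rw [← Phi_D]; exact Phi_comm (fun x => (x : ℂ)) h
  have step1 : (γ * NormedSpace.exp ((-t : ℂ) • (D * D))).trace = (γ * P).trace := by
    rw [hexp, hdecomp, mul_add, Matrix.trace_add, trace_trick γ D (Φ h) hanti hcommDh,
      add_zero]
  -- properties of P
  have hPH : Pᴴ = P := by
    rw [hPdef, Phi_star k]
    refine Phi_congr _ _ fun x => ?_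
    by_cases hx : x = 0 <;> simp [hk, hx]
  have hPP : P * P = P := by
    rw [hPdef, Phi_mul k k]
    refine Phi_congr _ _ fun x => ?_
    by_cases hx : x = 0 <;> simp [hk, hx]
  have hDP : D * P = 0 := by
    rw [hPdef, ← Phi_D, Phi_mul (fun x => (x : ℂ)) k, ← Phi_zero]
    refine Phi_congr _ _ fun x => ?_
    by_cases hx : x = 0 <;> simp [hk, hx]
  have hMP : 1 - P = Φ m2 * D := by
    calc 1 - P = Φ (fun _ => 1) - Φ k := by rw [Phi_one, hPdef]
      _ = Φ (fun x => 1 - k x) := (Phi_sub _ _).symm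
      _ = Φ (fun x => m2 x * (x : ℂ)) := by
          refine Phi_congr _ _ fun x => ?_
          by_cases hx : x = 0
          · simp [hk, hm2, hx]
          · have hx' : (x : ℂ) ≠ 0 := Complex.ofReal_ne_zero.mpr hx
            simp only [hk, hm2, if_neg hx]
            field_simp
            ring
      _ = Φ m2 * Φ (fun x => (x : ℂ)) := (Phi_mul _ _).symm
      _ = Φ m2 * D := by rw [Phi_D]
  -- γ commutes with P
  have hDγ : D * γ = -(γ * D) := eq_neg_of_add_eq_zero_left hanti
  have hP2H : (γ * P * γ)ᴴ = γ * P * γ := by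
    simp only [Matrix.conjTranspose_mul, hγ.eq, hPH, mul_assoc]
  have hDP2 : D * (γ * P * γ) = 0 := by
    calc D * (γ * P * γ) = (D * γ) * P * γ := by simp only [mul_assoc]
      _ = (-(γ * D)) * P * γ := by rw [hDγ]
      _ = -(γ * (D * P) * γ) := by simp only [neg_mul, mul_assoc]
      _ = 0 := by rw [hDP]; simp
  have hMP2 : 1 - γ * P * γ = (-(γ * Φ m2 * γ)) * D := by
    have h1 : γ * (1 - P) * γ = 1 - γ * P * γ := by
      rw [mul_sub, sub_mul, mul_one, hγ2]
    have h2 : γ * (Φ m2 * D) * γ = (-(γ * Φ m2 * γ)) * D := by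
      calc γ * (Φ m2 * D) * γ = γ * Φ m2 * (D * γ) := by simp only [mul_assoc]
        _ = γ * Φ m2 * (-(γ * D)) := by rw [hDγ]
        _ = (-(γ * Φ m2 * γ)) * D := by simp only [neg_mul, mul_neg, mul_assoc]
    rw [← h1, hMP, h2]
  have hPcomm' : P = γ * P * γ :=
    proj_unique D P (γ * P * γ) (Φ m2) (-(γ * Φ m2 * γ)) hPH hP2H hDP hDP2 hMP hMP2
  have hγPcomm : γ * P = P * γ := by
    calc γ * P = γ * P * (γ * γ) := by rw [hγ2, mul_one]
      _ = (γ * P * γ) * γ := by simp only [mul_assoc]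
      _ = P * γ := by rw [← hPcomm']
  -- the supersymmetry operator A = γ P
  obtain ⟨A, hAdef⟩ : ∃ A : Matrix (Fin n) (Fin n) ℂ, A = γ * P := ⟨_, rfl⟩
  have hγA : γ * A = P := by
    rw [hAdef, ← mul_assoc, hγ2, one_mul]
  have hDA : D * A = 0 := by
    calc D * A = (D * γ) * P := by rw [hAdef, mul_assoc]
      _ = (-(γ * D)) * P := by rw [hDγ]
      _ = -(γ * (D * P)) := by simp only [neg_mul, mul_assoc]
      _ = 0 := by rw [hDP]; simp
  -- the projections Q₊ and Q₋
  obtain ⟨Qp, hQpdef⟩ : ∃ Q : Matrix (Fin n) (Fin n) ℂ, Q = (2 : ℂ)⁻¹ • (P + A) := ⟨_, rfl⟩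
  obtain ⟨Qm, hQmdef⟩ : ∃ Q : Matrix (Fin n) (Fin n) ℂ, Q = (2 : ℂ)⁻¹ • (P - A) := ⟨_, rfl⟩
  have htraceA : (γ * P).trace = Qp.trace - Qm.trace := by
    rw [← hAdef, hQpdef, hQmdef, Matrix.trace_smul, Matrix.trace_smul, Matrix.trace_add,
      Matrix.trace_sub]
    simp only [smul_eq_mul]
    ring
  have hDQp : D * Qp = 0 := by
    rw [hQpdef, mul_smul_comm, mul_add, hDP, hDA, add_zero, smul_zero]
  have hγQp : (γ - 1) * Qp = 0 := by
    have hQ : γ * Qp = Qp := by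
      rw [hQpdef, mul_smul_comm, mul_add, hγA, ← hAdef, add_comm]
    rw [sub_mul, one_mul, hQ, sub_self]
  have hDQm : D * Qm = 0 := by
    rw [hQmdef, mul_smul_comm, mul_sub, hDP, hDA, sub_zero, smul_zero]
  have hγQm : (γ + 1) * Qm = 0 := by
    have hQ : γ * Qm = -Qm := by
      rw [hQmdef, mul_smul_comm, mul_sub, hγA, ← hAdef, ← smul_neg, neg_sub]
    rw [add_mul, one_mul, hQ, neg_add_cancel]
  -- fixed points
  have hfixP : ∀ x : Fin n → ℂ, D *ᵥ x = 0 → P *ᵥ x = x := by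
    intro x hx
    have hmv := congrArg (fun B => B *ᵥ x) hMP
    simp only [Matrix.sub_mulVec, Matrix.one_mulVec, ← Matrix.mulVec_mulVec, hx,
      Matrix.mulVec_zero] at hmv
    exact (sub_eq_zero.mp hmv).symm
  have hprojp : LinearMap.IsProj
      (LinearMap.ker D.mulVecLin ⊓ LinearMap.ker (γ - 1).mulVecLin) Qp.mulVecLin := by
    constructor
    · intro x
      refine Submodule.mem_inf.mpr ⟨?_, ?_⟩
      · show D.mulVecLin (Qp.mulVecLin x) = 0
        rw [← LinearMap.comp_apply, ← Matrix.mulVecLin_mul, hDQp]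
        simp
      · show (γ - 1).mulVecLin (Qp.mulVecLin x) = 0
        rw [← LinearMap.comp_apply, ← Matrix.mulVecLin_mul, hγQp]
        simp
    · intro x hx
      obtain ⟨hx1, hx2⟩ := Submodule.mem_inf.mp hx
      have hx1' : D *ᵥ x = 0 := hx1
      have hx2' : γ *ᵥ x = x := by
        have hmv : (γ - 1) *ᵥ x = 0 := hx2
        rw [Matrix.sub_mulVec, Matrix.one_mulVec, sub_eq_zero] at hmv
        exact hmv
      have hPx : P *ᵥ x = x := hfixP x hx1'
      have hAx : A *ᵥ x = x := by
        rw [hAdef, ← Matrix.mulVec_mulVec, hPx, hx2']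
      show Qp *ᵥ x = x
      rw [hQpdef, Matrix.smul_mulVec, Matrix.add_mulVec, hPx, hAx]
      ext i
      simp only [Pi.smul_apply, Pi.add_apply, smul_eq_mul]
      ring
  have hprojm : LinearMap.IsProj
      (LinearMap.ker D.mulVecLin ⊓ LinearMap.ker (γ + 1).mulVecLin) Qm.mulVecLin := by
    constructor
    · intro x
      refine Submodule.mem_inf.mpr ⟨?_, ?_⟩
      · show D.mulVecLin (Qm.mulVecLin x) = 0
        rw [← LinearMap.comp_apply, ← Matrix.mulVecLin_mul, hDQm]
        simp
      · show (γ + 1).mulVecLin (Qm.mulVecLin x) = 0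
        rw [← LinearMap.comp_apply, ← Matrix.mulVecLin_mul, hγQm]
        simp
    · intro x hx
      obtain ⟨hx1, hx2⟩ := Submodule.mem_inf.mp hx
      have hx1' : D *ᵥ x = 0 := hx1
      have hx2' : γ *ᵥ x = -x := by
        have hmv : (γ + 1) *ᵥ x = 0 := hx2
        rw [Matrix.add_mulVec, Matrix.one_mulVec] at hmv
        linear_combination (norm := module) hmv
      have hPx : P *ᵥ x = x := hfixP x hx1'
      have hAx : A *ᵥ x = -x := by
        rw [hAdef, ← Matrix.mulVec_mulVec, hPx, hx2']
      show Qm *ᵥ x = x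
      rw [hQmdef, Matrix.smul_mulVec, Matrix.sub_mulVec, hPx, hAx]
      ext i
      simp only [Pi.smul_apply, Pi.sub_apply, Pi.neg_apply, smul_eq_mul]
      ring
  rw [step1, htraceA, trace_eq_finrank_of_isProj Qp _ hprojp,
    trace_eq_finrank_of_isProj Qm _ hprojm]
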